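/- In deep water with γ > 0 and κ ≥ 0, the function f₋(ξ) = γ/(2ξ) − sqrt((g + κξ² + γ²/(4ξ))/ξ) (for ξ > 0, corresponding to the left branch f(−ξ) of the dispersion relation) satisfies lim_{ξ→0⁺} f₋(ξ) = −g/γ. -/

import Mathlib

theorem stmt_6 (g γ κ : ℝ) (hg : 0 < g) (hγ : 0 < γ) (hκ : 0 ≤ κ) :
    Filter.Tendsto
      (fun ξ : ℝ => γ / (2 * ξ) - Real.sqrt ((g + κ * ξ ^ 2 + γ ^ 2 / (4 * ξ)) * (1 / ξ)))
      (nhdsWithin 0 (Set.Ioi 0)) (nhds (-(g / γ))) := by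
  have hsq : Real.sqrt (γ ^ 2 / 4) = γ / 2 := by
    rw [show γ ^ 2 / 4 = (γ / 2) ^ 2 by ring, Real.sqrt_sq (by positivity)]
  have h2 : Filter.Tendsto
      (fun ξ : ℝ => (-g - κ * ξ ^ 2) / (γ / 2 + Real.sqrt (g * ξ + κ * ξ ^ 3 + γ ^ 2 / 4)))
      (nhdsWithin 0 (Set.Ioi 0)) (nhds (-(g / γ))) := by
    have hc : ContinuousAt
        (fun ξ : ℝ => (-g - κ * ξ ^ 2) / (γ / 2 + Real.sqrt (g * ξ + κ * ξ ^ 3 + γ ^ 2 / 4))) 0 := by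
      apply ContinuousAt.div
      · fun_prop
      · exact (continuous_const.add (Real.continuous_sqrt.comp (by fun_prop))).continuousAt
      · show γ / 2 + Real.sqrt (g * 0 + κ * 0 ^ 3 + γ ^ 2 / 4) ≠ 0
        rw [show g * 0 + κ * 0 ^ 3 + γ ^ 2 / 4 = γ ^ 2 / 4 by ring, hsq]
        positivity
    have := hc.continuousWithinAt (s := Set.Ioi 0)
    have hval : (-g - κ * (0:ℝ) ^ 2) / (γ / 2 + Real.sqrt (g * 0 + κ * 0 ^ 3 + γ ^ 2 / 4)) = -(g / γ) := by
      rw [show g * 0 + κ * 0 ^ 3 + γ ^ 2 / 4 = γ ^ 2 / 4 by ring, hsq]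
      field_simp
      ring
    rw [ContinuousWithinAt, hval] at this
    exact this
  apply h2.congr'
  filter_upwards [self_mem_nhdsWithin] with ξ (hξ : 0 < ξ)
  set b := Real.sqrt ((g + κ * ξ ^ 2 + γ ^ 2 / (4 * ξ)) * (1 / ξ)) with hb
  have hEpos : 0 < (g + κ * ξ ^ 2 + γ ^ 2 / (4 * ξ)) * (1 / ξ) := by positivity
  have hb2 : b ^ 2 = (g + κ * ξ ^ 2 + γ ^ 2 / (4 * ξ)) * (1 / ξ) :=
    Real.sq_sqrt hEpos.le
  have hbnn : 0 ≤ b := Real.sqrt_nonneg _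
  have hxb : Real.sqrt (g * ξ + κ * ξ ^ 3 + γ ^ 2 / 4) = ξ * b := by
    rw [hb, ← Real.sqrt_sq hξ.le, ← Real.sqrt_mul (by positivity)]
    congr 1
    field_simp
    ring
    exact Real.sq_sqrt (sq_nonneg _)
  rw [hxb]
  have hden : 0 < γ / 2 + ξ * b := by positivity
  rw [div_eq_iff hden.ne']
  have hξb2 : ξ * b ^ 2 = g + κ * ξ ^ 2 + γ ^ 2 / (4 * ξ) := by
    rw [hb2]; field_simp
  have hξne := hξ.ne'
  have expand : (γ / (2 * ξ) - b) * (γ / 2 + ξ * b) = γ ^ 2 / (4 * ξ) - ξ * b ^ 2 := by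
    field_simp
    ring
  rw [expand, hξb2]
  ring
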